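/- Let p be a prime and let m be an integer with m > 1. Let w be an odd integer whose least prime factor is greater than p^m. Then there exists a strictly optimal (wp(p^m−1), p^{m−1}, p; p^m w)-FHS set; that is, there exists a set S of M = p^{m−1} FHSs of length n = wp(p^m−1) over an alphabet of size l = p^m w such that H(S;L) ≤ ⌈Lp/n⌉ for every L with 1 ≤ L ≤ n, where p = ⌈(2InM−(I+1)Il)/((nM−1)M)⌉ with I = ⌊nM/l⌋. -/

import Mathlib

/-- Partial Hamming correlation `H_{X,Y}(τ; j | L)` of the frequency hopping
sequences `X, Y : ZMod n → F` for shift `τ`, window start `j` and window length `L`. -/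
def partialHC {n : ℕ} {F : Type*} [DecidableEq F] (X Y : ZMod n → F)
    (τ j : ZMod n) (L : ℕ) : ℕ :=
  ∑ t ∈ Finset.range L, if X (j + (t : ZMod n)) = Y (j + (t : ZMod n) + τ) then 1 else 0

/-- The Peng–Fan bound value `⌈(2InM − (I+1)Il) / ((nM−1)M)⌉` where `I = ⌊nM/l⌋`. -/
def pengFanBound (n M l : ℕ) : ℤ :=
  ⌈(((2 * (n * M / l) * n * M : ℕ) : ℚ) - (((n * M / l + 1) * (n * M / l) * l : ℕ) : ℚ))
    / ((((n * M : ℕ) : ℚ) - 1) * (M : ℚ))⌉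

/-- There is a strictly optimal `(n, M, λ; l)`-FHS set (with respect to the Peng–Fan
bound): `λ` equals the Peng–Fan bound value and there are `M` pairwise distinct FHSs of
length `n` over an alphabet of size `l` whose maximum nontrivial partial Hamming
correlation satisfies `H(S; L) ≤ ⌈Lλ/n⌉` for every window length `1 ≤ L ≤ n`. -/
def IsStrictlyOptimalFHSSet (n M lam l : ℕ) : Prop :=
  (lam : ℤ) = pengFanBound n M l ∧
  ∃ X : Fin M → (ZMod n → Fin l),
    (∀ a b : Fin M, a ≠ b → X a ≠ X b) ∧
    ∀ L : ℕ, 1 ≤ L → L ≤ n →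
      (∀ a : Fin M, ∀ τ : ZMod n, τ ≠ 0 → ∀ j : ZMod n,
        (partialHC (X a) (X a) τ j L : ℤ) ≤ ⌈((L * lam : ℕ) : ℚ) / (n : ℚ)⌉) ∧
      (∀ a b : Fin M, a ≠ b → ∀ τ j : ZMod n,
        (partialHC (X a) (X b) τ j L : ℤ) ≤ ⌈((L * lam : ℕ) : ℚ) / (n : ℚ)⌉)

lemma stmt9_coprime_aux {k w : ℕ} (hk : 0 < k) (h : k < w.minFac) : Nat.Coprime k w := by
  have hg1 : 0 < Nat.gcd k w := Nat.gcd_pos_of_pos_left w hk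
  by_contra hne
  rw [Nat.Coprime] at hne
  have h2 : 2 ≤ Nat.gcd k w := by omega
  have h3 := Nat.minFac_le_of_dvd h2 (Nat.gcd_dvd_right k w)
  have h4 := Nat.le_of_dvd hk (Nat.gcd_dvd_left k w)
  omega

lemma stmt9_projadd {n d : ℕ} [NeZero n] (hd : d ∣ n) (x y : ZMod n) :
    (((x + y).val : ℕ) : ZMod d) = ((x.val : ℕ) : ZMod d) + ((y.val : ℕ) : ZMod d) := by
  have h1 : (x + y).val ≡ x.val + y.val [MOD d] := by
    rw [ZMod.val_add]; exact (Nat.mod_modEq _ n).of_dvd hd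
  calc (((x + y).val : ℕ) : ZMod d) = ((x.val + y.val : ℕ) : ZMod d) :=
        (ZMod.natCast_eq_natCast_iff _ _ _).mpr h1
    _ = _ := by push_cast; ring

lemma stmt9_natproj {n d : ℕ} [NeZero n] (hd : d ∣ n) (x : ℕ) :
    (((x : ZMod n).val : ℕ) : ZMod d) = (x : ZMod d) := by
  rw [ZMod.val_natCast]
  exact (ZMod.natCast_eq_natCast_iff _ _ _).mpr ((Nat.mod_modEq x n).of_dvd hd)

lemma stmt9_count {e : ℕ} [NeZero e] (L : ℕ) (r : ZMod e) :
    (Finset.filter (fun t => ((t : ℕ) : ZMod e) = r) (Finset.range L)).card ≤ (L - 1) / e + 1 := by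
  classical
  have he : 0 < e := Nat.pos_of_ne_zero (NeZero.ne e)
  calc (Finset.filter (fun t => ((t : ℕ) : ZMod e) = r) (Finset.range L)).card
      ≤ (Finset.range ((L - 1) / e + 1)).card := by
        apply Finset.card_le_card_of_injOn (fun t => t / e)
        · intro t ht
          rw [Finset.mem_coe, Finset.mem_filter, Finset.mem_range] at ht
          rw [Finset.mem_coe, Finset.mem_range]
          beta_reduce
          have : t / e ≤ (L - 1) / e := Nat.div_le_div_right (by omega)
          omega
        · intro x hx y hy hxy
          simp only [Finset.coe_filter, Set.mem_setOf_eq, Finset.mem_range] at hx hy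
          have hx2 : x % e = r.val := by rw [← ZMod.val_natCast, hx.2]
          have hy2 : y % e = r.val := by rw [← ZMod.val_natCast, hy.2]
          have hxy' : x / e = y / e := hxy
          calc x = e * (x / e) + x % e := (Nat.div_add_mod x e).symm
            _ = e * (y / e) + y % e := by rw [hxy', hx2, hy2]
            _ = y := Nat.div_add_mod y e
    _ = (L - 1) / e + 1 := Finset.card_range _

/-- The FHS construction: first coordinate `α^z + ι(u) + c`, second `(z+1)·y`,
where `z, u, y` are the reductions of `t` modulo `E`, `pp`, `w`. -/
def stmt9Y {n : ℕ} (E w pp : ℕ) {F : Type*} [Field F] (α : F) (ι : ZMod pp →+* F) (c : F)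
    (t : ZMod n) : F × ZMod w :=
  (α ^ ((t.val : ZMod E)).val + ι ((t.val : ℕ) : ZMod pp) + c,
   ((((t.val : ZMod E)).val + 1 : ℕ) : ZMod w) * ((t.val : ℕ) : ZMod w))

lemma stmt9_core {n E w pp : ℕ} [NeZero n] [NeZero E] [NeZero w] {F : Type*} [Field F]
    (hEdvd : E ∣ n) (hwdvd : w ∣ n) (hpdvd : pp ∣ n) (hn : pp * E * w = n)
    (hcopEw : Nat.Coprime E w) (hcoppE : Nat.Coprime pp E) (hcoppw : Nat.Coprime pp w)
    (α : F) (hα1 : α ^ E = 1)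
    (hαinj : ∀ x y : ℕ, x < E → y < E → α ^ x = α ^ y → x = y)
    (ι : ZMod pp →+* F)
    (hunit : ∀ k : ℕ, 0 < k → k ≤ E → IsUnit ((k : ℕ) : ZMod w))
    (ca cb : F) (hD0 : ∀ s : ZMod pp, ι s = ca - cb → (ca = cb ∧ s = 0))
    (τ : ZMod n) (hnt : ¬(ca = cb ∧ τ = 0)) (t t' : ZMod n)
    (h : stmt9Y E w pp α ι ca t = stmt9Y E w pp α ι cb (t + τ))
    (h' : stmt9Y E w pp α ι ca t' = stmt9Y E w pp α ι cb (t' + τ)) :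
    ((t.val : ℕ) : ZMod (E * w)) = ((t'.val : ℕ) : ZMod (E * w)) := by
  have hE0 : 0 < E := Nat.pos_of_ne_zero (NeZero.ne E)
  have hαmod : ∀ x : ℕ, α ^ (x % E) = α ^ x := by
    intro x
    conv_rhs => rw [← Nat.div_add_mod x E]
    rw [pow_add, pow_mul, hα1, one_pow, one_mul]
  simp only [stmt9Y, Prod.mk.injEq] at h h'
  obtain ⟨h1, h2⟩ := h
  obtain ⟨h1', h2'⟩ := h'
  rw [stmt9_projadd hEdvd t τ, stmt9_projadd hpdvd t τ, map_add] at h1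
  rw [stmt9_projadd hEdvd t τ, stmt9_projadd hwdvd t τ] at h2
  rw [stmt9_projadd hEdvd t' τ, stmt9_projadd hpdvd t' τ, map_add] at h1'
  rw [stmt9_projadd hEdvd t' τ, stmt9_projadd hwdvd t' τ] at h2'
  set zt : ZMod E := ((t.val : ℕ) : ZMod E) with hzt
  set zt' : ZMod E := ((t'.val : ℕ) : ZMod E) with hzt'
  set σ1 : ZMod E := ((τ.val : ℕ) : ZMod E) with hσ1def
  set σ0 : ZMod pp := ((τ.val : ℕ) : ZMod pp) with hσ0def
  set ρ : ZMod w := ((τ.val : ℕ) : ZMod w) with hρdef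
  set yt : ZMod w := ((t.val : ℕ) : ZMod w) with hyt
  set yt' : ZMod w := ((t'.val : ℕ) : ZMod w) with hyt'
  have hz1 : ∀ zz : ZMod E, α ^ (zz + σ1).val = α ^ zz.val * α ^ σ1.val := by
    intro zz; rw [ZMod.val_add, hαmod, pow_add]
  by_cases hσ1 : σ1 = 0
  · -- degenerate case: derive a contradiction with nontriviality
    exfalso
    rw [hσ1, add_zero] at h1 h2
    have hD : ι σ0 = ca - cb := by linear_combination -h1
    obtain ⟨hcc, hσ0⟩ := hD0 σ0 hD
    have hzu := hunit (zt.val + 1) (by omega) (by have := ZMod.val_lt zt; omega)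
    have hcρ : (((zt.val + 1 : ℕ)) : ZMod w) * ρ = 0 := by linear_combination -h2
    have hρ : ρ = 0 := (hzu.mul_right_eq_zero).mp hcρ
    have hEd : E ∣ τ.val := (ZMod.natCast_eq_zero_iff _ _).mp hσ1
    have hpd : pp ∣ τ.val := (ZMod.natCast_eq_zero_iff _ _).mp hσ0
    have hwd : w ∣ τ.val := (ZMod.natCast_eq_zero_iff _ _).mp hρ
    have h1d : pp * E ∣ τ.val := Nat.Coprime.mul_dvd_of_dvd_of_dvd hcoppE hpd hEd
    have h2d : pp * E * w ∣ τ.val :=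
      Nat.Coprime.mul_dvd_of_dvd_of_dvd (Nat.Coprime.mul hcoppw hcopEw) h1d hwd
    rw [hn] at h2d
    have hτ0 : τ.val = 0 := Nat.eq_zero_of_dvd_of_lt h2d (ZMod.val_lt τ)
    exact hnt ⟨hcc, (ZMod.val_eq_zero τ).mp hτ0⟩
  · -- main case
    have hs1lt := ZMod.val_lt σ1
    have hs1pos : 0 < σ1.val := by
      rcases Nat.eq_zero_or_pos σ1.val with h0 | h0
      · exact absurd ((ZMod.val_eq_zero σ1).mp h0) hσ1
      · exact h0
    have hαs : α ^ σ1.val ≠ 1 := by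
      intro hcon
      have := hαinj σ1.val 0 hs1lt hE0 (by rw [pow_zero]; exact hcon)
      omega
    rw [hz1 zt] at h1
    rw [hz1 zt'] at h1'
    have hD : α ^ zt.val * (1 - α ^ σ1.val) = ι σ0 + cb - ca := by linear_combination h1
    have hD' : α ^ zt'.val * (1 - α ^ σ1.val) = ι σ0 + cb - ca := by linear_combination h1'
    have hzz : zt = zt' := by
      have hne : (1 - α ^ σ1.val) ≠ 0 := sub_ne_zero.mpr (Ne.symm hαs)
      have hvals := hαinj zt.val zt'.val (ZMod.val_lt zt) (ZMod.val_lt zt')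
        (mul_right_cancel₀ hne (hD.trans hD'.symm))
      have := congrArg (fun k : ℕ => ((k : ℕ) : ZMod E)) hvals
      simpa [ZMod.natCast_rightInverse zt, ZMod.natCast_rightInverse zt'] using this
    rw [← hzz] at h2'
    have hsub : ((((zt.val + 1 : ℕ)) : ZMod w) - (((zt + σ1).val + 1 : ℕ) : ZMod w))
        * (yt - yt') = 0 := by linear_combination h2 - h2'
    have hAne : zt.val ≠ (zt + σ1).val := by
      intro hcon
      apply hσ1
      have h1 : zt = zt + σ1 := by
        have := congrArg (fun k : ℕ => ((k : ℕ) : ZMod E)) hcon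
        simpa [ZMod.natCast_rightInverse zt, ZMod.natCast_rightInverse (zt + σ1)] using this
      exact (left_eq_add.mp h1)
    have hAu : IsUnit ((((zt.val + 1 : ℕ)) : ZMod w) - (((zt + σ1).val + 1 : ℕ) : ZMod w)) := by
      have hAlt : zt.val + 1 ≤ E := by have := ZMod.val_lt zt; omega
      have hBlt : (zt + σ1).val + 1 ≤ E := by have := ZMod.val_lt (zt + σ1); omega
      rcases lt_or_gt_of_ne hAne with hlt | hgt
      · have hcast : (((zt.val + 1 : ℕ)) : ZMod w) - (((zt + σ1).val + 1 : ℕ) : ZMod w)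
            = -((((zt + σ1).val - zt.val : ℕ)) : ZMod w) := by
          rw [Nat.cast_sub (by omega)]
          push_cast
          ring
        rw [hcast]
        exact (hunit ((zt + σ1).val - zt.val) (by omega) (by omega)).neg
      · have hcast : (((zt.val + 1 : ℕ)) : ZMod w) - (((zt + σ1).val + 1 : ℕ) : ZMod w)
            = (((zt.val - (zt + σ1).val : ℕ)) : ZMod w) := by
          rw [Nat.cast_sub (by omega)]
          push_cast
          ring
        rw [hcast]
        exact hunit (zt.val - (zt + σ1).val) (by omega) (by omega)
    have hyy : yt = yt' := sub_eq_zero.mp ((hAu.mul_right_eq_zero).mp hsub)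
    rw [ZMod.natCast_eq_natCast_iff]
    refine (Nat.modEq_and_modEq_iff_modEq_mul hcopEw).mp ⟨?_, ?_⟩
    · exact (ZMod.natCast_eq_natCast_iff _ _ _).mp hzz
    · exact (ZMod.natCast_eq_natCast_iff _ _ _).mp hyy

lemma stmt9_build (p m w : ℕ) [Fact p.Prime] (hm : 1 < m) (hwp : p ^ m < w.minFac)
    {F : Type*} [Field F] [Fintype F] [Algebra (ZMod p) F]
    (hcardF : Fintype.card F = p ^ m) :
    ∃ X : Fin (p ^ (m - 1)) → (ZMod (w * p * (p ^ m - 1)) → Fin (p ^ m * w)),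
      (∀ a b : Fin (p ^ (m - 1)), a ≠ b → X a ≠ X b) ∧
      ∀ L : ℕ, 1 ≤ L → L ≤ w * p * (p ^ m - 1) →
        (∀ a : Fin (p ^ (m - 1)), ∀ τ : ZMod (w * p * (p ^ m - 1)), τ ≠ 0 →
          ∀ j : ZMod (w * p * (p ^ m - 1)),
          (partialHC (X a) (X a) τ j L : ℤ) ≤
            ⌈((L * p : ℕ) : ℚ) / ((w * p * (p ^ m - 1) : ℕ) : ℚ)⌉) ∧
        (∀ a b : Fin (p ^ (m - 1)), a ≠ b → ∀ τ j : ZMod (w * p * (p ^ m - 1)),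
          (partialHC (X a) (X b) τ j L : ℤ) ≤
            ⌈((L * p : ℕ) : ℚ) / ((w * p * (p ^ m - 1) : ℕ) : ℚ)⌉) := by
  classical
  have hp : p.Prime := Fact.out
  have hp2 : 2 ≤ p := hp.two_le
  have hpm4 : 4 ≤ p ^ m := by
    calc (4:ℕ) = 2 ^ 2 := rfl
    _ ≤ p ^ 2 := Nat.pow_le_pow_left hp2 2
    _ ≤ p ^ m := Nat.pow_le_pow_right (by omega) hm
  set E : ℕ := p ^ m - 1 with hEdef
  have hE3 : 3 ≤ E := by omega
  have hE1 : E + 1 = p ^ m := by omega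
  have hw2 : 2 ≤ w := by
    by_contra hcon
    push_neg at hcon
    interval_cases w
    · rw [Nat.minFac_zero] at hwp; omega
    · rw [Nat.minFac_one] at hwp; omega
  have hwpm : p ^ m < w := lt_of_lt_of_le hwp (Nat.minFac_le (by omega))
  set n : ℕ := w * p * E with hndef
  set M : ℕ := p ^ (m - 1) with hMdef
  set l : ℕ := p ^ m * w with hldef
  haveI : NeZero E := ⟨by omega⟩
  haveI : NeZero w := ⟨by omega⟩
  haveI : NeZero n := ⟨by simp [hndef]; omega⟩
  haveI : NeZero (E * w) := ⟨by positivity⟩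
  -- divisibility and coprimality facts
  have hEdvd : E ∣ n := ⟨w * p, by rw [hndef]; ring⟩
  have hwdvd : w ∣ n := ⟨p * E, by rw [hndef]; ring⟩
  have hpdvd : p ∣ n := ⟨w * E, by rw [hndef]; ring⟩
  have hEwdvd : E * w ∣ n := ⟨p, by rw [hndef]; ring⟩
  have hnfac : p * E * w = n := by rw [hndef]; ring
  have hcopEw : Nat.Coprime E w := stmt9_coprime_aux (by omega) (by omega)
  have hcoppE : Nat.Coprime p E := by
    refine (Nat.Prime.coprime_iff_not_dvd hp).mpr ?_
    intro hdvd
    have h2 : p ∣ p ^ m := dvd_pow_self p (by omega)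
    have h3 := Nat.dvd_sub h2 hdvd
    rw [show p ^ m - E = 1 by omega] at h3
    have := Nat.le_of_dvd one_pos h3
    omega
  have hcoppw : Nat.Coprime p w := by
    have hle : p ≤ p ^ m := Nat.le_self_pow (by omega) p
    exact stmt9_coprime_aux (by omega) (by omega)
  -- a multiplicative generator
  obtain ⟨g, hg⟩ := IsCyclic.exists_generator (α := Fˣ)
  have hordg : orderOf g = E := by
    rw [orderOf_eq_card_of_forall_mem_zpowers hg, Nat.card_eq_fintype_card,
      Fintype.card_units, hcardF]
  have hα1 : (g : F) ^ E = 1 := by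
    have h := pow_orderOf_eq_one g
    rw [hordg] at h
    have h2 : ((g ^ E : Fˣ) : F) = ((1 : Fˣ) : F) := by rw [h]
    simpa [Units.val_pow_eq_pow_val] using h2
  have hαinj : ∀ x y : ℕ, x < E → y < E → (g : F) ^ x = (g : F) ^ y → x = y := by
    intro x y hx hy hxy
    have hxy' : (g ^ x : Fˣ) = g ^ y := Units.ext (by
      simpa [Units.val_pow_eq_pow_val] using hxy)
    have hmod := pow_eq_pow_iff_modEq.mp hxy'
    rw [hordg] at hmod
    rw [Nat.ModEq, Nat.mod_eq_of_lt hx, Nat.mod_eq_of_lt hy] at hmod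
    exact hmod
  -- the additive shifts γ
  haveI : Module.Finite (ZMod p) F := Module.Finite.of_finite
  have hrankF : Module.finrank (ZMod p) F = m := by
    have h := Module.card_eq_pow_finrank (K := ZMod p) (V := F)
    rw [hcardF, ZMod.card] at h
    exact (Nat.pow_right_injective hp2 h).symm
  set S : Submodule (ZMod p) F := Submodule.span (ZMod p) {1} with hSdef
  haveI : Fintype (F ⧸ S) := Fintype.ofFinite _
  have hrankS : Module.finrank (ZMod p) S = 1 := finrank_span_singleton one_ne_zero
  have hrk := Submodule.finrank_quotient_add_finrank S
  have hrankQ : Module.finrank (ZMod p) (F ⧸ S) = m - 1 := by omega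
  have hcardQ : Fintype.card (F ⧸ S) = M := by
    rw [Module.card_eq_pow_finrank (K := ZMod p) (V := F ⧸ S), ZMod.card, hrankQ]
  set eqv : Fin M ≃ (F ⧸ S) := (Fintype.equivFinOfCardEq hcardQ).symm with heqv
  set γ : Fin M → F := fun a => Function.surjInv (Submodule.mkQ_surjective S) (eqv a)
    with hγdef
  have hγmk : ∀ a, S.mkQ (γ a) = eqv a := fun a => Function.surjInv_eq _ _
  have hγS : ∀ a b : Fin M, γ a - γ b ∈ S → a = b := by
    intro a b hab
    have h1 : S.mkQ (γ a) = S.mkQ (γ b) := by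
      rw [Submodule.mkQ_apply, Submodule.mkQ_apply]
      exact (Submodule.Quotient.eq S).mpr hab
    rw [hγmk, hγmk] at h1
    exact eqv.injective h1
  have hγinj : ∀ a b : Fin M, γ a = γ b → a = b := by
    intro a b h
    exact hγS a b (by rw [h, sub_self]; exact S.zero_mem)
  set ι : ZMod p →+* F := algebraMap (ZMod p) F with hιdef
  have hιmem : ∀ c : ZMod p, ι c ∈ S := by
    intro c
    rw [hιdef, Algebra.algebraMap_eq_smul_one]
    exact S.smul_mem c (Submodule.mem_span_singleton_self 1)
  have hD0 : ∀ a b : Fin M, ∀ s : ZMod p, ι s = γ a - γ b → (γ a = γ b ∧ s = 0) := by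
    intro a b s hs
    have hmem : γ a - γ b ∈ S := hs ▸ hιmem s
    have hab : a = b := hγS a b hmem
    subst hab
    refine ⟨rfl, ?_⟩
    have h0 : ι s = ι 0 := by rw [hs, sub_self, map_zero]
    exact (algebraMap (ZMod p) F).injective h0
  -- units of ZMod w
  have hunit : ∀ k : ℕ, 0 < k → k ≤ E → IsUnit ((k : ℕ) : ZMod w) := by
    intro k hk hkE
    rw [ZMod.isUnit_iff_coprime]
    exact stmt9_coprime_aux hk (by omega)
  -- the alphabet
  have hcardP : Fintype.card (F × ZMod w) = l := by
    rw [Fintype.card_prod, hcardF, ZMod.card, hldef]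
  set eqw : (F × ZMod w) ≃ Fin l := Fintype.equivFinOfCardEq hcardP with heqw
  set X : Fin M → ZMod n → Fin l :=
    fun a t => eqw (stmt9Y E w p (g : F) ι (γ a) t) with hXdef
  refine ⟨X, ?_, ?_⟩
  · -- distinctness
    intro a b hab hXeq
    apply hab
    have h0 : stmt9Y (n := n) E w p (g : F) ι (γ a) (0 : ZMod n) =
        stmt9Y (n := n) E w p (g : F) ι (γ b) (0 : ZMod n) := by
      apply eqw.injective
      have := congrFun hXeq (0 : ZMod n)
      simpa [hXdef] using this
    have h1 := congrArg Prod.fst h0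
    simp only [stmt9Y] at h1
    exact hγinj a b (by linear_combination h1)
  · -- the partial Hamming correlation bounds
    intro L hL1 hLn
    have hbound : ∀ (a b : Fin M) (τ j : ZMod n), ¬(γ a = γ b ∧ τ = 0) →
        (partialHC (X a) (X b) τ j L : ℤ) ≤ ⌈((L * p : ℕ) : ℚ) / ((n : ℕ) : ℚ)⌉ := by
      intro a b τ j hnt
      have hkey : partialHC (X a) (X b) τ j L ≤ (L - 1) / (E * w) + 1 := by
        by_cases hex : ∃ t0 ∈ Finset.range L,
            X a (j + (t0 : ZMod n)) = X b (j + (t0 : ZMod n) + τ)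
        · obtain ⟨t0, ht0m, ht0⟩ := hex
          have h0 : partialHC (X a) (X b) τ j L =
              (Finset.filter (fun t : ℕ => X a (j + (t : ZMod n)) = X b (j + (t : ZMod n) + τ))
                (Finset.range L)).card := by
            rw [partialHC, Finset.sum_boole, Nat.cast_id]
          rw [h0]
          have hsub : (Finset.filter
              (fun t : ℕ => X a (j + (t : ZMod n)) = X b (j + (t : ZMod n) + τ))
                (Finset.range L)) ⊆
              Finset.filter (fun t : ℕ => ((t : ℕ) : ZMod (E * w)) = ((t0 : ℕ) : ZMod (E * w)))
                (Finset.range L) := by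
            intro x hx
            rw [Finset.mem_filter] at hx ⊢
            refine ⟨hx.1, ?_⟩
            have hYx : stmt9Y (n := n) E w p (g : F) ι (γ a) (j + (x : ZMod n)) =
                stmt9Y E w p (g : F) ι (γ b) (j + (x : ZMod n) + τ) := by
              apply eqw.injective
              have := hx.2
              simpa [hXdef] using this
            have hYt0 : stmt9Y (n := n) E w p (g : F) ι (γ a) (j + (t0 : ZMod n)) =
                stmt9Y E w p (g : F) ι (γ b) (j + (t0 : ZMod n) + τ) := by
              apply eqw.injective
              simpa [hXdef] using ht0
            have hres := stmt9_core hEdvd hwdvd hpdvd hnfac hcopEw hcoppE hcoppw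
              (g : F) hα1 hαinj ι hunit (γ a) (γ b) (hD0 a b) τ hnt _ _ hYx hYt0
            rw [stmt9_projadd hEwdvd j ((x : ℕ) : ZMod n),
              stmt9_projadd hEwdvd j ((t0 : ℕ) : ZMod n),
              stmt9_natproj hEwdvd x, stmt9_natproj hEwdvd t0] at hres
            exact add_left_cancel hres
          exact le_trans (Finset.card_le_card hsub) (stmt9_count L _)
        · push_neg at hex
          have h0 : partialHC (X a) (X b) τ j L = 0 :=
            Finset.sum_eq_zero fun t ht => by rw [if_neg (hex t ht)]
          rw [h0]
          exact Nat.zero_le _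
      have hRHS : (((L - 1) / (E * w) + 1 : ℕ) : ℤ) ≤
          ⌈((L * p : ℕ) : ℚ) / ((n : ℕ) : ℚ)⌉ := by
        have hlt : ((((L - 1) / (E * w) : ℕ)) : ℤ) < ⌈((L * p : ℕ) : ℚ) / ((n : ℕ) : ℚ)⌉ := by
          rw [Int.lt_ceil]
          have hEw0 : (0:ℚ) < ((E * w : ℕ) : ℚ) := by
            have : 0 < E * w := by positivity
            exact_mod_cast this
          have hnq : ((n : ℕ) : ℚ) = (p : ℚ) * (((E * w : ℕ)) : ℚ) := by
            have h := hnfac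
            have : ((n : ℕ) : ℚ) = ((p * E * w : ℕ) : ℚ) := by exact_mod_cast h.symm
            rw [this]; push_cast; ring
          have c1 : ((((L - 1) / (E * w) : ℕ)) : ℚ) ≤ ((L - 1 : ℕ) : ℚ) / ((E * w : ℕ) : ℚ) :=
            Nat.cast_div_le
          have c2 : ((L - 1 : ℕ) : ℚ) < ((L : ℕ) : ℚ) := by
            exact_mod_cast Nat.sub_lt (by omega) one_pos
          have c3 : ((L - 1 : ℕ) : ℚ) / ((E * w : ℕ) : ℚ) < (L : ℚ) / ((E * w : ℕ) : ℚ) :=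
            (div_lt_div_iff_of_pos_right hEw0).mpr c2
          have c4 : (L : ℚ) / ((E * w : ℕ) : ℚ) = ((L * p : ℕ) : ℚ) / ((n : ℕ) : ℚ) := by
            rw [hnq]
            have hp0 : (0:ℚ) < (p:ℚ) := by exact_mod_cast hp.pos
            field_simp
            push_cast
            ring
          rw [Int.cast_natCast]
          linarith [c1, c3, c4.le, c4.symm.le]
        rw [Nat.cast_add, Nat.cast_one]
        exact Int.add_one_le_iff.mpr hlt
      calc (partialHC (X a) (X b) τ j L : ℤ)
          ≤ (((L - 1) / (E * w) + 1 : ℕ) : ℤ) := by exact_mod_cast hkey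
        _ ≤ _ := hRHS
    constructor
    · intro a τ hτ j
      exact hbound a a τ j (fun hcon => hτ hcon.2)
    · intro a b hab τ j
      exact hbound a b τ j (fun hcon => hab (hγinj a b hcon.1))

theorem stmt9 (p m w : ℕ) (hp : p.Prime) (hm : 1 < m)
    (hw : Odd w) (hwp : p ^ m < w.minFac) :
    IsStrictlyOptimalFHSSet (w * p * (p ^ m - 1)) (p ^ (m - 1)) p (p ^ m * w) := by
  classical
  haveI hfact : Fact p.Prime := ⟨hp⟩
  have hp2 : 2 ≤ p := hp.two_le
  have hpm4 : 4 ≤ p ^ m := by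
    calc (4:ℕ) = 2 ^ 2 := rfl
    _ ≤ p ^ 2 := Nat.pow_le_pow_left hp2 2
    _ ≤ p ^ m := Nat.pow_le_pow_right (by omega) hm
  set E : ℕ := p ^ m - 1 with hEdef
  have hE3 : 3 ≤ E := by omega
  have hE1 : E + 1 = p ^ m := by omega
  have hw2 : 2 ≤ w := by
    by_contra hcon
    push_neg at hcon
    interval_cases w
    · rw [Nat.minFac_zero] at hwp; omega
    · rw [Nat.minFac_one] at hwp; omega
  have hwpm : p ^ m < w := lt_of_lt_of_le hwp (Nat.minFac_le (by omega))
  set n : ℕ := w * p * E with hndef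
  set M : ℕ := p ^ (m - 1) with hMdef
  set l : ℕ := p ^ m * w with hldef
  have hMp : p * M = p ^ m := by
    rw [hMdef, ← pow_succ']
    congr 1
    omega
  have hM2 : 2 ≤ M := by
    calc 2 = 2 ^ 1 := rfl
    _ ≤ p ^ 1 := Nat.pow_le_pow_left hp2 1
    _ ≤ p ^ (m - 1) := Nat.pow_le_pow_right (by omega) (by omega)
  have hl0 : 0 < l := by positivity
  have hn0 : 0 < n := by
    have : 0 < E := by omega
    positivity
  have hnMl : n * M = l * E := by
    calc n * M = w * (p * M) * E := by ring
    _ = w * p ^ m * E := by rw [hMp]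
    _ = l * E := by rw [hldef]; ring
  constructor
  · -- the Peng–Fan bound equals p
    have hI : n * M / l = E := by rw [hnMl]; exact Nat.mul_div_cancel_left E hl0
    rw [pengFanBound, hI, eq_comm, Int.ceil_eq_iff]
    have hnM2 : 2 ≤ n * M := by nlinarith
    have hC : (0:ℚ) < (((n * M : ℕ) : ℚ) - 1) * (M : ℚ) := by
      have h2 : (2:ℚ) ≤ ((n * M : ℕ) : ℚ) := by exact_mod_cast hnM2
      have hM0 : (0:ℚ) < (M : ℚ) := by positivity
      nlinarith
    have q1 : (n : ℚ) * M = (l : ℚ) * E := by exact_mod_cast hnMl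
    have q2 : (p : ℚ) * M = (E : ℚ) + 1 := by exact_mod_cast hMp.trans hE1.symm
    have qE : (3:ℚ) ≤ (E : ℚ) := by exact_mod_cast hE3
    have qM : (2:ℚ) ≤ (M : ℚ) := by exact_mod_cast hM2
    have ql : (1:ℚ) ≤ (l : ℚ) := by exact_mod_cast hl0
    have hle1 : (1:ℚ) ≤ (l : ℚ) * E := by nlinarith
    constructor
    · rw [lt_div_iff₀ hC]
      push_cast
      have hB : ((p:ℚ) - 1) * ((((n:ℚ) * M) - 1) * M) = ((E:ℚ) + 1 - M) * ((l:ℚ) * E - 1) := by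
        linear_combination ((n:ℚ) * M - 1) * q2 + ((E:ℚ) + 1 - (M:ℚ)) * q1
      have hA : 2 * (E:ℚ) * n * M = 2 * E * l * E := by linear_combination (2 * (E:ℚ)) * q1
      have G : ((E:ℚ) + 1 - M) * ((l:ℚ) * E - 1) < 2 * (E:ℚ) * l * E - ((E:ℚ) + 1) * E * l := by
        have hle0 : (0:ℚ) ≤ (l:ℚ) * E - 1 := by linarith
        have hMl : 2 * ((l:ℚ) * E - 1) ≤ (M:ℚ) * ((l:ℚ) * E - 1) :=
          mul_le_mul_of_nonneg_right qM hle0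
        nlinarith [hMl, qE]
      linarith [hB, hA, G]
    · rw [div_le_iff₀ hC]
      push_cast
      have hB2 : (p:ℚ) * ((((n:ℚ) * M) - 1) * M) = ((E:ℚ) + 1) * ((l:ℚ) * E - 1) := by
        linear_combination ((n:ℚ) * M - 1) * q2 + ((E:ℚ) + 1) * q1
      have hA : 2 * (E:ℚ) * n * M = 2 * E * l * E := by linear_combination (2 * (E:ℚ)) * q1
      have G2 : 2 * (E:ℚ) * l * E - ((E:ℚ) + 1) * E * l ≤ ((E:ℚ) + 1) * ((l:ℚ) * E - 1) := by
        have hE0q : (0:ℚ) ≤ (E:ℚ) := by linarith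
        have hEl : (E:ℚ) * 1 ≤ (E:ℚ) * (l:ℚ) := mul_le_mul_of_nonneg_left ql hE0q
        nlinarith [hEl, qE]
      linarith [hB2, hA, G2]
  · -- the construction
    haveI : Fintype (GaloisField p m) := Fintype.ofFinite _
    have hcardF : Fintype.card (GaloisField p m) = p ^ m := by
      have h := GaloisField.card p m (by omega)
      rwa [Nat.card_eq_fintype_card] at h
    exact stmt9_build p m w hm hwp (F := GaloisField p m) hcardF
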